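/- Let A be a permutation of [k], let Γ be a measure on [0,1]², and let {Γ_x} be a disintegration along the first coordinate. Suppose there exist disjoint sets P₁ < P₂ < … < P_k ⊆ [0,1] (each interval P_i lying entirely to the left of P_{i+1}) of positive Lebesgue measure, and disjoint intervals J₁ < J₂ < … < J_k ⊆ [0,1], such that Γ_x(J_j) > 0 for every x ∈ P_i and every i, j ∈ [k]. Then t(A,Γ) ≥ ∏_{i=1}^k ∫_{P_i} Γ_x(J_{A(i)}) dλ(x) > 0. -/

import Mathlib

open MeasureTheory Set ENNReal

/-- Geometric representations of the pattern `A`. -/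
def patternSet {k : ℕ} (A : Equiv.Perm (Fin k)) : Set (Fin k → ℝ × ℝ) :=
  {f | StrictMono (fun i => (f i).1) ∧ ∀ i j : Fin k, A i < A j ↔ (f i).2 < (f j).2}

/-- Core covering lemma: if a finite box is covered by countably many boxes (indexed by a
set `N` of naturals), then the product of the measures of the sides is bounded by the sum
of the products.  No σ-finiteness is needed. -/
lemma cover_prod_le {ι : Type*} {α : ι → Type*} [∀ i, MeasurableSpace (α i)]
    (μ : ∀ i, Measure (α i)) (u : Finset ι)
    (s : ∀ i, Set (α i)) (hsne : ∀ i, (s i).Nonempty)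
    (a : ℕ → ∀ i, Set (α i)) (ha : ∀ n i, MeasurableSet (a n i))
    (N : Set ℕ)
    (hcov : (u : Set ι).pi s ⊆ ⋃ n ∈ N, (u : Set ι).pi (a n)) :
    ∏ i ∈ u, μ i (s i) ≤ ∑' n : N, ∏ i ∈ u, μ i (a n i) := by
  classical
  induction u using Finset.induction_on generalizing N with
  | empty =>
      have hf : (fun i => (hsne i).some) ∈ ((∅ : Finset ι) : Set ι).pi s := by
        simp
      obtain ⟨n, hnN, -⟩ := mem_iUnion₂.1 (hcov hf)
      simp only [Finset.prod_empty]
      exact ENNReal.le_tsum (f := fun _ : N => (1 : ℝ≥0∞)) (⟨n, hnN⟩ : N)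
  | @insert i₀ u hi₀ IH =>
      set c := ∏ i ∈ u, μ i (s i) with hc
      set f : ℕ → ℝ≥0∞ := fun n => ∏ i ∈ u, μ i (a n i) with hfdef
      -- the function we will integrate over `s i₀`
      set G : ℕ → α i₀ → ℝ≥0∞ :=
        fun n x => (a n i₀).indicator (fun _ => N.indicator f n) x with hG
      have key : ∀ x ∈ s i₀, c ≤ ∑' n : ℕ, G n x := by
        intro x hx
        have hcov' : (u : Set ι).pi s ⊆
            ⋃ n ∈ {m | m ∈ N ∧ x ∈ a m i₀}, (u : Set ι).pi (a n) := by
          intro g hg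
          have hg' : Function.update g i₀ x ∈ ((insert i₀ u : Finset ι) : Set ι).pi s := by
            intro j hj
            rcases Finset.mem_insert.1 (by exact_mod_cast hj) with rfl | hju
            · simpa using hx
            · have : j ≠ i₀ := fun h => hi₀ (h ▸ hju)
              simpa [Function.update_of_ne this] using hg j hju
          obtain ⟨n, hnN, hn⟩ := mem_iUnion₂.1 (hcov hg')
          refine mem_iUnion₂.2 ⟨n, ⟨hnN, ?_⟩, ?_⟩
          · have := hn i₀ (by simp)
            simpa using this
          · intro j hju
            have hju' : j ∈ u := by exact_mod_cast hju
            have hne : j ≠ i₀ := fun h => hi₀ (h ▸ hju')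
            have h := hn j (by simp [hju'])
            rwa [Function.update_of_ne hne] at h
        have hIH := IH _ hcov'
        calc c ≤ ∑' n : {m | m ∈ N ∧ x ∈ a m i₀}, f n := hIH
          _ = ∑' n : ℕ, Set.indicator {m | m ∈ N ∧ x ∈ a m i₀} f n := tsum_subtype _ _
          _ ≤ ∑' n : ℕ, G n x := by
              refine ENNReal.tsum_le_tsum fun n => ?_
              by_cases h1 : n ∈ N
              · by_cases h2 : x ∈ a n i₀
                · simp [hG, Set.indicator_of_mem, h1, h2, Set.indicator,
                    Set.mem_setOf_eq]
                · simp [hG, Set.indicator, h2, Set.mem_setOf_eq]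
              · simp [hG, Set.indicator, h1, Set.mem_setOf_eq]
      have hGmeas : ∀ n, Measurable (G n) := fun n =>
        (measurable_const (a := N.indicator f n)).indicator (ha n i₀)
      have h1 : c * μ i₀ (s i₀) ≤ ∫⁻ x in s i₀, ∑' n, G n x ∂(μ i₀) := by
        have : ∫⁻ _ in s i₀, c ∂(μ i₀) = c * μ i₀ (s i₀) := setLIntegral_const _ _
        rw [← this]
        exact setLIntegral_mono (Measurable.ennreal_tsum hGmeas) key
      have h2 : ∫⁻ x in s i₀, ∑' n, G n x ∂(μ i₀) = ∑' n, ∫⁻ x in s i₀, G n x ∂(μ i₀) :=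
        lintegral_tsum fun n => (hGmeas n).aemeasurable
      have h3 : ∀ n, ∫⁻ x in s i₀, G n x ∂(μ i₀) ≤
          N.indicator (fun n => μ i₀ (a n i₀) * f n) n := by
        intro n
        have heq : ∫⁻ x in s i₀, G n x ∂(μ i₀)
            = N.indicator f n * ((μ i₀).restrict (s i₀)) (a n i₀) :=
          lintegral_indicator_const (ha n i₀) _
        rw [heq]
        by_cases h1 : n ∈ N
        · rw [Set.indicator_of_mem h1, Set.indicator_of_mem h1, mul_comm]
          exact mul_le_mul_left (Measure.restrict_apply_le _ _) _
        · simp [Set.indicator_of_notMem h1]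
      have h4 : (∑' n, ∫⁻ x in s i₀, G n x ∂(μ i₀)) ≤
          ∑' n : N, ∏ i ∈ insert i₀ u, μ i (a n i) := by
        calc (∑' n, ∫⁻ x in s i₀, G n x ∂(μ i₀))
            ≤ ∑' n : ℕ, N.indicator (fun n => μ i₀ (a n i₀) * f n) n :=
              ENNReal.tsum_le_tsum h3
          _ = ∑' n : N, μ i₀ (a (n : ℕ) i₀) * f n := (tsum_subtype _ _).symm
          _ = ∑' n : N, ∏ i ∈ insert i₀ u, μ i (a (n : ℕ) i) := by
              refine tsum_congr fun n => ?_
              rw [Finset.prod_insert hi₀]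
      calc ∏ i ∈ insert i₀ u, μ i (s i) = μ i₀ (s i₀) * c := Finset.prod_insert hi₀
        _ = c * μ i₀ (s i₀) := mul_comm _ _
        _ ≤ _ := h1.trans (h2.le.trans h4)

/-- Lower bound for the product measure of a measurable box, valid for arbitrary measures
(no σ-finiteness). -/
lemma prod_le_pi {ι : Type*} [Fintype ι] {α : ι → Type*} [∀ i, MeasurableSpace (α i)]
    (μ : ∀ i, Measure (α i)) (s : ∀ i, Set (α i)) (hs : ∀ i, MeasurableSet (s i)) :
    ∏ i, μ i (s i) ≤ Measure.pi μ (Set.pi univ s) := by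
  classical
  by_cases hne : ∀ i, (s i).Nonempty
  · rw [Measure.pi_def, toMeasure_apply _ _ (MeasurableSet.univ_pi hs)]
    rw [OuterMeasure.pi, OuterMeasure.boundedBy_apply]
    refine le_iInf fun t => le_iInf fun htcov => ?_
    set a : ℕ → ∀ i, Set (α i) := fun n i => toMeasurable (μ i) (Function.eval i '' t n)
      with hadef
    have ha : ∀ n i, MeasurableSet (a n i) := fun n i => measurableSet_toMeasurable _ _
    set N : Set ℕ := {n | (t n).Nonempty} with hN
    have hcov : ((Finset.univ : Finset ι) : Set ι).pi s ⊆
        ⋃ n ∈ N, ((Finset.univ : Finset ι) : Set ι).pi (a n) := by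
      intro g hg
      have : g ∈ ⋃ n, t n := htcov (by intro i _; exact hg i (by simp))
      obtain ⟨n, hn⟩ := mem_iUnion.1 this
      refine mem_iUnion₂.2 ⟨n, ⟨g, hn⟩, fun i _ => ?_⟩
      exact subset_toMeasurable _ _ ⟨g, hn, rfl⟩
    have h1 := cover_prod_le μ Finset.univ s hne a ha N hcov
    have h2 : (∑' n : N, ∏ i ∈ Finset.univ, μ i (a (n : ℕ) i)) ≤
        ∑' n : ℕ, ⨆ _ : (t n).Nonempty, MeasureTheory.piPremeasure
          (fun i => (μ i).toOuterMeasure) (t n) := by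
      calc (∑' n : N, ∏ i ∈ Finset.univ, μ i (a (n : ℕ) i))
          = ∑' n : ℕ, N.indicator (fun n => ∏ i ∈ Finset.univ, μ i (a n i)) n :=
            tsum_subtype N (fun n => ∏ i ∈ Finset.univ, μ i (a n i))
        _ ≤ _ := by
            refine ENNReal.tsum_le_tsum fun n => ?_
            by_cases hn : n ∈ N
            · rw [Set.indicator_of_mem hn]
              have : (⨆ _ : (t n).Nonempty, MeasureTheory.piPremeasure
                  (fun i => (μ i).toOuterMeasure) (t n)) = MeasureTheory.piPremeasure
                  (fun i => (μ i).toOuterMeasure) (t n) := by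
                exact ciSup_pos hn
              rw [this, MeasureTheory.piPremeasure]
              refine Finset.prod_le_prod' fun i _ => ?_
              rw [hadef]
              simp only [Measure.toOuterMeasure_apply]
              rw [measure_toMeasurable]
            · simp [Set.indicator_of_notMem hn]
    calc ∏ i, μ i (s i) ≤ _ := h1
      _ ≤ _ := h2
  · push_neg at hne
    obtain ⟨i, hi⟩ := hne
    refine le_trans (le_of_eq ?_) (zero_le ..)
    exact Finset.prod_eq_zero (Finset.mem_univ i) (by rw [hi, measure_empty])

/-- If there are horizontally ordered sets `P 1 < … < P k` of positive
measure and vertically ordered disjoint intervals `J 1 < … < J k` such that every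
fiber over `P i` gives positive mass to every `J j`, then
`t(A,Γ) ≥ ∏ i, ∫_{P i} Γx x (J (A i)) dx > 0`. -/
theorem stmt6 (k : ℕ) (A : Equiv.Perm (Fin k)) (Γ : Measure (ℝ × ℝ))
    (Γx : ℝ → Measure ℝ) (hmeas : Measurable Γx)
    (hdis : ∀ B : Set (ℝ × ℝ), MeasurableSet B →
      Γ B = ∫⁻ x in Icc (0 : ℝ) 1, Γx x {y | (x, y) ∈ B})
    (P : Fin k → Set ℝ) (hPm : ∀ i, MeasurableSet (P i))
    (hPsub : ∀ i, P i ⊆ Icc 0 1) (hPpos : ∀ i, 0 < volume (P i))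
    (hPord : ∀ i j : Fin k, i < j → ∀ a ∈ P i, ∀ b ∈ P j, a < b)
    (J : Fin k → Set ℝ) (hJint : ∀ j, (J j).OrdConnected) (hJm : ∀ j, MeasurableSet (J j))
    (hJord : ∀ i j : Fin k, i < j → ∀ a ∈ J i, ∀ b ∈ J j, a < b)
    (hfib : ∀ i j : Fin k, ∀ x ∈ P i, 0 < Γx x (J j)) :
    (∏ i : Fin k, (∫⁻ x in P i, Γx x (J (A i)))) ≤
        (k.factorial : ℝ≥0∞) * Measure.pi (fun _ : Fin k => Γ) (patternSet A) ∧
      0 < ∏ i : Fin k, (∫⁻ x in P i, Γx x (J (A i))) := by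
  classical
  set B : Fin k → Set (ℝ × ℝ) := fun i => P i ×ˢ J (A i) with hB
  have hBm : ∀ i, MeasurableSet (B i) := fun i => (hPm i).prod (hJm (A i))
  have hmeasg : ∀ j : Fin k, Measurable fun x => Γx x (J j) := fun j =>
    (Measure.measurable_coe (hJm j)).comp hmeas
  -- each factor equals Γ (B i)
  have hΓB : ∀ i, Γ (B i) = ∫⁻ x in P i, Γx x (J (A i)) := by
    intro i
    rw [hdis _ (hBm i)]
    have hset : ∀ x : ℝ, Γx x {y | (x, y) ∈ B i}
        = (P i).indicator (fun x => Γx x (J (A i))) x := by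
      intro x
      by_cases hx : x ∈ P i
      · have : {y | (x, y) ∈ B i} = J (A i) := by
          ext y; simp [hB, Set.mem_prod, hx]
        rw [this, Set.indicator_of_mem hx]
      · have : {y | (x, y) ∈ B i} = (∅ : Set ℝ) := by
          ext y; simp [hB, Set.mem_prod, hx]
        rw [this, Set.indicator_of_notMem hx, measure_empty]
    simp_rw [hset]
    rw [lintegral_indicator (hPm i), Measure.restrict_restrict (hPm i),
      Set.inter_eq_self_of_subset_left (hPsub i)]
  -- the box is contained in the pattern set
  have hsub : Set.pi univ B ⊆ patternSet A := by
    intro f hf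
    have hf' : ∀ i, (f i).1 ∈ P i ∧ (f i).2 ∈ J (A i) := by
      intro i
      have := hf i (mem_univ i)
      simpa [hB, Set.mem_prod] using this
    constructor
    · intro i j hij
      exact hPord i j hij _ (hf' i).1 _ (hf' j).1
    · intro i j
      constructor
      · intro hAij
        exact hJord (A i) (A j) hAij _ (hf' i).2 _ (hf' j).2
      · intro hy
        by_contra hAij
        rcases lt_or_eq_of_le (not_lt.1 hAij) with h | h
        · exact absurd hy (not_lt.2 (le_of_lt (hJord (A j) (A i) h _ (hf' j).2 _ (hf' i).2)))
        · have : i = j := A.injective h.symm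
          subst this
          exact lt_irrefl _ hy
  -- the chain of inequalities
  have hchain : (∏ i : Fin k, (∫⁻ x in P i, Γx x (J (A i)))) ≤
      Measure.pi (fun _ : Fin k => Γ) (patternSet A) := by
    calc (∏ i : Fin k, (∫⁻ x in P i, Γx x (J (A i))))
        = ∏ i : Fin k, Γ (B i) := by
          exact Finset.prod_congr rfl fun i _ => (hΓB i).symm
      _ ≤ Measure.pi (fun _ : Fin k => Γ) (Set.pi univ B) := prod_le_pi _ _ hBm
      _ ≤ Measure.pi (fun _ : Fin k => Γ) (patternSet A) := measure_mono hsub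
  refine ⟨?_, ?_⟩
  · refine hchain.trans ?_
    refine le_mul_of_one_le_left (zero_le ..) ?_
    exact_mod_cast Nat.one_le_iff_ne_zero.2 (Nat.factorial_pos k).ne'
  · refine CanonicallyOrderedAdd.prod_pos.2 fun i _ => ?_
    rw [lintegral_pos_iff_support (hmeasg (A i))]
    have hsubP : P i ⊆ Function.support fun x => Γx x (J (A i)) := fun x hx =>
      (hfib i (A i) x hx).ne'
    calc (0 : ℝ≥0∞) < volume (P i) := hPpos i
      _ = (volume.restrict (P i)) (P i) := (Measure.restrict_apply_self _ _).symm
      _ ≤ (volume.restrict (P i)) (Function.support fun x => Γx x (J (A i))) :=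
          measure_mono hsubP
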